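/- Let n, m, n' and m' be nonnegative integers such that n+m = n'+m', this common sum is even, and |n − n'| is even. Then the partisan chocolate game positions PC(n,m) and PC(n',m') are equivalent (equal as normal-play game values). -/

import Mathlib

universe u

/-- Pre-games (removed from Mathlib; restored with the old meaning). -/
inductive SetTheory.PGame : Type (u + 1)
  | mk : ∀ α β : Type u, (α → SetTheory.PGame) → (β → SetTheory.PGame) → SetTheory.PGame

namespace SetTheory.PGame

/-- Inner recursion on the second game: the pair (x ≤ y, x ⧏ y). -/
def leLFAux (xl xr : Type u) (xL : xl → PGame.{u}) (xR : xr → PGame.{u})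
    (ihL : xl → PGame.{u} → Prop × Prop) (ihR : xr → PGame.{u} → Prop × Prop) :
    PGame.{u} → Prop × Prop
  | mk yl yr yL yR =>
    ((∀ i, (ihL i (mk yl yr yL yR)).2) ∧ ∀ j, (leLFAux xl xr xL xR ihL ihR (yR j)).2,
     (∃ i, (leLFAux xl xr xL xR ihL ihR (yL i)).1) ∨ ∃ j, (ihR j (mk yl yr yL yR)).1)

/-- The pair (x ≤ y, x ⧏ y). -/
def leLF : PGame.{u} → PGame.{u} → Prop × Prop
  | mk xl xr xL xR => leLFAux xl xr xL xR (fun i => leLF (xL i)) (fun j => leLF (xR j))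

/-- `x ≤ y`: no left option of `x` is `≥ y` and no right option of `y` is `≤ x`. -/
def Le (x y : PGame.{u}) : Prop := (leLF x y).1

/-- Equivalence of pre-games: `x ≤ y ∧ y ≤ x`. -/
def Equiv (x y : PGame.{u}) : Prop := Le x y ∧ Le y x

end SetTheory.PGame

open SetTheory

/-- The partisan chocolate game position `PC n m`.
Left options: `PC n' m` with `n' < n` and `n' + m` even, and `PC n m'` with `m' < m` and
`n + m'` even. Right options: the same with "odd" in place of "even". -/
def PC : ℕ → ℕ → SetTheory.PGame
  | n, m =>
    SetTheory.PGame.mk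
      {p : ℕ × ℕ // (p.2 = m ∧ p.1 < n ∧ Even (p.1 + m)) ∨ (p.1 = n ∧ p.2 < m ∧ Even (n + p.2))}
      {p : ℕ × ℕ // (p.2 = m ∧ p.1 < n ∧ Odd (p.1 + m)) ∨ (p.1 = n ∧ p.2 < m ∧ Odd (n + p.2))}
      (fun p => PC p.1.1 p.1.2)
      (fun p => PC p.1.1 p.1.2)
termination_by n m => n + m
decreasing_by
  all_goals rcases p.2 with ⟨h1, h2, -⟩ | ⟨h1, h2, -⟩ <;> omega

open SetTheory.PGame

instance : LE SetTheory.PGame := ⟨SetTheory.PGame.Le⟩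

/-- `x ⧏ y`: the second component of `leLF`. -/
def SetTheory.PGame.LF (x y : SetTheory.PGame) : Prop := (SetTheory.PGame.leLF x y).2

infix:50 " ⧏ " => SetTheory.PGame.LF

lemma SetTheory.PGame.lf_of_le_moveLeft {x : SetTheory.PGame} {yl yr : Type} {yL : yl → SetTheory.PGame}
    {yR : yr → SetTheory.PGame} (i : yl) (h : x ≤ yL i) : x ⧏ SetTheory.PGame.mk yl yr yL yR := by
  cases x
  exact Or.inl ⟨i, h⟩

lemma SetTheory.PGame.lf_of_moveRight_le {y : SetTheory.PGame} {xl xr : Type} {xL : xl → SetTheory.PGame}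
    {xR : xr → SetTheory.PGame} (j : xr) (h : xR j ≤ y) : SetTheory.PGame.mk xl xr xL xR ⧏ y := by
  cases y
  exact Or.inr ⟨j, h⟩

lemma SetTheory.PGame.le_iff_forall_lf {xl xr yl yr : Type} {xL : xl → SetTheory.PGame}
    {xR : xr → SetTheory.PGame} {yL : yl → SetTheory.PGame} {yR : yr → SetTheory.PGame} :
    SetTheory.PGame.mk xl xr xL xR ≤ SetTheory.PGame.mk yl yr yL yR ↔
      (∀ i, xL i ⧏ SetTheory.PGame.mk yl yr yL yR) ∧ ∀ j, SetTheory.PGame.mk xl xr xL xR ⧏ yR j :=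
  Iff.rfl

lemma PC_eq (n m : ℕ) : PC n m = SetTheory.PGame.mk
    {p : ℕ × ℕ // (p.2 = m ∧ p.1 < n ∧ Even (p.1 + m)) ∨ (p.1 = n ∧ p.2 < m ∧ Even (n + p.2))}
    {p : ℕ × ℕ // (p.2 = m ∧ p.1 < n ∧ Odd (p.1 + m)) ∨ (p.1 = n ∧ p.2 < m ∧ Odd (n + p.2))}
    (fun p => PC p.1.1 p.1.2) (fun p => PC p.1.1 p.1.2) := by
  rw [PC]

/-- If `(a,b)` is a Left option of `PC n m` and `x ≤ PC a b` then `x ⧏ PC n m`. -/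
lemma lf_PC {x : SetTheory.PGame} {n m a b : ℕ}
    (h : (b = m ∧ a < n ∧ Even (a + m)) ∨ (a = n ∧ b < m ∧ Even (n + b)))
    (hx : x ≤ PC a b) : x ⧏ PC n m := by
  rw [PC_eq n m]
  exact PGame.lf_of_le_moveLeft (i := ⟨(a, b), h⟩) hx

/-- If `(c,d)` is a Right option of `PC n m` and `PC c d ≤ y` then `PC n m ⧏ y`. -/
lemma PC_lf {y : SetTheory.PGame} {n m c d : ℕ}
    (h : (d = m ∧ c < n ∧ Odd (c + m)) ∨ (c = n ∧ d < m ∧ Odd (n + d)))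
    (hy : PC c d ≤ y) : PC n m ⧏ y := by
  rw [PC_eq n m]
  exact PGame.lf_of_moveRight_le (j := ⟨(c, d), h⟩) hy

/-- Introduction rule for `PC n m ≤ PC n' m'`. -/
lemma PC_le_PC {n m n' m' : ℕ}
    (hL : ∀ a b, ((b = m ∧ a < n ∧ Even (a + m)) ∨ (a = n ∧ b < m ∧ Even (n + b))) →
      PC a b ⧏ PC n' m')
    (hR : ∀ c d, ((d = m' ∧ c < n' ∧ Odd (c + m')) ∨ (c = n' ∧ d < m' ∧ Odd (n' + d))) →
      PC n m ⧏ PC c d) :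
    PC n m ≤ PC n' m' := by
  rw [PC_eq n m, PC_eq n' m']
  refine PGame.le_iff_forall_lf.2 ⟨?_, ?_⟩
  · rintro ⟨⟨a, b⟩, h⟩
    exact (PC_eq n' m') ▸ hL a b h
  · rintro ⟨⟨c, d⟩, h⟩
    exact (PC_eq n m) ▸ hR c d h

set_option maxHeartbeats 2000000 in
mutual

/-- Even sums: monotone in the effective index `n+m-2*(n%2)`. -/
theorem keyE (n m n' m' : ℕ) (h0 : (n + m) % 2 = 0) (h0' : (n' + m') % 2 = 0)
    (hee : n + m + 2 * (n' % 2) ≤ n' + m' + 2 * (n % 2)) : PC n m ≤ PC n' m' := by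
  refine PC_le_PC ?_ ?_
  · -- Left options of PC n m
    rintro a b (⟨hbm, ha, he⟩ | ⟨han, hb, he⟩) <;> rw [Nat.even_iff] at he <;>
    [ (have hfacts : (a + b) % 2 = 0 ∧ a % 2 = n % 2 ∧ a + b + 2 ≤ n + m := by omega);
      (have hfacts : (a + b) % 2 = 0 ∧ a % 2 = n % 2 ∧ a + b + 2 ≤ n + m := by omega)] <;>
    · obtain ⟨hp1, hp2, hp3⟩ := hfacts
      rcases le_or_gt 2 n' with hn2 | hn2
      · refine lf_PC (Or.inl ⟨rfl, by omega, by rw [Nat.even_iff]; omega⟩)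
          (keyE a b (n' - 2) m' (by omega) (by omega) (by omega))
      · rcases le_or_gt 2 m' with hm2 | hm2
        · refine lf_PC (Or.inr ⟨rfl, by omega, by rw [Nat.even_iff]; omega⟩)
            (keyE a b n' (m' - 2) (by omega) (by omega) (by omega))
        · exact absurd hee (by omega)
  · -- Right options of PC n' m'
    rintro c d (⟨hdm, hc, ho⟩ | ⟨hcn, hd, ho⟩) <;> rw [Nat.odd_iff] at ho <;>
    [ (have hfacts : (c + d) % 2 = 1 ∧ c + d + 1 ≤ n' + m' := by omega);
      (have hfacts : (c + d) % 2 = 1 ∧ c + d + 1 ≤ n' + m' := by omega)] <;>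
    · obtain ⟨hp1, hp2⟩ := hfacts
      rcases le_or_gt (c + d + 1) (n + m) with hcase | hcase
      · -- use a Right option of PC n m of sum n+m-1
        rcases le_or_gt 1 n with hn1 | hn1
        · refine PC_lf (Or.inl ⟨rfl, by omega, by rw [Nat.odd_iff]; omega⟩)
            (keyO (n - 1) m c d (by omega) (by omega) (by omega))
        · refine PC_lf (Or.inr ⟨rfl, by omega, by rw [Nat.odd_iff]; omega⟩)
            (keyO n (m - 1) c d (by omega) (by omega) (by omega))
      · -- c+d ≥ n+m+1 : use a Left option of PC c d of effective index c+d-1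
        by_cases hc1 : c % 2 = 1
        · refine lf_PC (Or.inl ⟨rfl, by omega, by rw [Nat.even_iff]; omega⟩)
            (keyE n m (c - 1) d (by omega) (by omega) (by omega))
        · refine lf_PC (Or.inr ⟨rfl, by omega, by rw [Nat.even_iff]; omega⟩)
            (keyE n m c (d - 1) (by omega) (by omega) (by omega))

termination_by n + m + (n' + m')
decreasing_by all_goals omega

/-- Odd sums: antitone in the sum. -/
theorem keyO (n m n' m' : ℕ) (h1 : (n + m) % 2 = 1) (h1' : (n' + m') % 2 = 1)
    (hle : n' + m' ≤ n + m) : PC n m ≤ PC n' m' := by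
  refine PC_le_PC ?_ ?_
  · rintro a b (⟨hbm, ha, he⟩ | ⟨han, hb, he⟩) <;> rw [Nat.even_iff] at he <;>
    [ (have hfacts : (a + b) % 2 = 0 ∧ a + b + 1 ≤ n + m := by omega);
      (have hfacts : (a + b) % 2 = 0 ∧ a + b + 1 ≤ n + m := by omega)] <;>
    · obtain ⟨hp1, hp2⟩ := hfacts
      rcases le_or_gt (a + b + 1) (n' + m') with hcase | hcase
      · -- use a Left option of PC n' m' of effective index n'+m'-1
        by_cases hn1 : n' % 2 = 1
        · refine lf_PC (Or.inl ⟨rfl, by omega, by rw [Nat.even_iff]; omega⟩)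
            (keyE a b (n' - 1) m' (by omega) (by omega) (by omega))
        · refine lf_PC (Or.inr ⟨rfl, by omega, by rw [Nat.even_iff]; omega⟩)
            (keyE a b n' (m' - 1) (by omega) (by omega) (by omega))
      · -- a+b ≥ n'+m'+1 : use a Right option of PC a b of sum a+b-1
        rcases le_or_gt 1 a with ha1 | ha1
        · refine PC_lf (Or.inl ⟨rfl, by omega, by rw [Nat.odd_iff]; omega⟩)
            (keyO (a - 1) b n' m' (by omega) (by omega) (by omega))
        · refine PC_lf (Or.inr ⟨rfl, by omega, by rw [Nat.odd_iff]; omega⟩)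
            (keyO a (b - 1) n' m' (by omega) (by omega) (by omega))
  · rintro c d (⟨hdm, hc, ho⟩ | ⟨hcn, hd, ho⟩) <;> rw [Nat.odd_iff] at ho <;>
    [ (have hfacts : (c + d) % 2 = 1 ∧ c + d + 2 ≤ n' + m' := by omega);
      (have hfacts : (c + d) % 2 = 1 ∧ c + d + 2 ≤ n' + m' := by omega)] <;>
    · obtain ⟨hp1, hp2⟩ := hfacts
      -- use a Right option of PC n m of sum n+m-2
      rcases le_or_gt 2 n with hn2 | hn2
      · refine PC_lf (Or.inl ⟨rfl, by omega, by rw [Nat.odd_iff]; omega⟩)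
          (keyO (n - 2) m c d (by omega) (by omega) (by omega))
      · rcases le_or_gt 2 m with hm2 | hm2
        · refine PC_lf (Or.inr ⟨rfl, by omega, by rw [Nat.odd_iff]; omega⟩)
            (keyO n (m - 2) c d (by omega) (by omega) (by omega))
        · exact absurd hle (by omega)

termination_by n + m + (n' + m')
decreasing_by all_goals omega

/-- Any even-sum position is ≤ any odd-sum position. -/
theorem keyC (n m n' m' : ℕ) (h0 : (n + m) % 2 = 0) (h1' : (n' + m') % 2 = 1) :
    PC n m ≤ PC n' m' := by
  refine PC_le_PC ?_ ?_
  · rintro a b (⟨hbm, ha, he⟩ | ⟨han, hb, he⟩) <;> rw [Nat.even_iff] at he <;>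
    [ (have hfacts : (a + b) % 2 = 0 ∧ a + b + 2 ≤ n + m := by omega);
      (have hfacts : (a + b) % 2 = 0 ∧ a + b + 2 ≤ n + m := by omega)] <;>
    · obtain ⟨hp1, hp2⟩ := hfacts
      rcases le_or_gt (a + b + 1) (n' + m') with hcase | hcase
      · by_cases hn1 : n' % 2 = 1
        · refine lf_PC (Or.inl ⟨rfl, by omega, by rw [Nat.even_iff]; omega⟩)
            (keyE a b (n' - 1) m' (by omega) (by omega) (by omega))
        · refine lf_PC (Or.inr ⟨rfl, by omega, by rw [Nat.even_iff]; omega⟩)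
            (keyE a b n' (m' - 1) (by omega) (by omega) (by omega))
      · rcases le_or_gt 1 a with ha1 | ha1
        · refine PC_lf (Or.inl ⟨rfl, by omega, by rw [Nat.odd_iff]; omega⟩)
            (keyO (a - 1) b n' m' (by omega) (by omega) (by omega))
        · refine PC_lf (Or.inr ⟨rfl, by omega, by rw [Nat.odd_iff]; omega⟩)
            (keyO a (b - 1) n' m' (by omega) (by omega) (by omega))
  · rintro c d (⟨hdm, hc, ho⟩ | ⟨hcn, hd, ho⟩) <;> rw [Nat.odd_iff] at ho <;>
    [ (have hfacts : (c + d) % 2 = 1 ∧ c + d + 2 ≤ n' + m' := by omega);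
      (have hfacts : (c + d) % 2 = 1 ∧ c + d + 2 ≤ n' + m' := by omega)] <;>
    · obtain ⟨hp1, hp2⟩ := hfacts
      rcases le_or_gt (c + d + 1) (n + m) with hcase | hcase
      · rcases le_or_gt 1 n with hn1 | hn1
        · refine PC_lf (Or.inl ⟨rfl, by omega, by rw [Nat.odd_iff]; omega⟩)
            (keyO (n - 1) m c d (by omega) (by omega) (by omega))
        · refine PC_lf (Or.inr ⟨rfl, by omega, by rw [Nat.odd_iff]; omega⟩)
            (keyO n (m - 1) c d (by omega) (by omega) (by omega))
      · by_cases hc1 : c % 2 = 1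
        · refine lf_PC (Or.inl ⟨rfl, by omega, by rw [Nat.even_iff]; omega⟩)
            (keyE n m (c - 1) d (by omega) (by omega) (by omega))
        · refine lf_PC (Or.inr ⟨rfl, by omega, by rw [Nat.even_iff]; omega⟩)
            (keyE n m c (d - 1) (by omega) (by omega) (by omega))
termination_by n + m + (n' + m')
decreasing_by all_goals omega

end

theorem stmt_7 (n m n' m' : ℕ) (hsum : n + m = n' + m') (heven : Even (n + m))
    (hdiff : Even ((n : ℤ) - n')) :
    (PC n m).Equiv (PC n' m') := by
  rw [Nat.even_iff] at heven
  have hpar : n % 2 = n' % 2 := by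
    rw [Int.even_sub, Int.even_coe_nat, Int.even_coe_nat, Nat.even_iff, Nat.even_iff] at hdiff
    by_cases h : n % 2 = 0
    · have := hdiff.mp h; omega
    · have : ¬ (n' % 2 = 0) := fun h' => h (hdiff.mpr h'); omega
  exact ⟨keyE n m n' m' heven (by omega) (by omega), keyE n' m' n m (by omega) heven (by omega)⟩
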